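/- Well-definedness of the load-distribution map H on a forest of basic activities: for every vector v = (v_i)_{i∈I} ∈ ℝ^I there exists a unique family w = (w_{ij})_{(i,j)∈E} ∈ ℝ^E satisfying (i) ∑_{j:(i,j)∈E} w_{ij} = v_i for every i ∈ I, and (ii) z_j(w)/μ_{ij} = z_{j'}(w)/μ_{ij'} for every i ∈ I and every pair of edges (i,j), (i,j') ∈ E, where z_j(w) = ∑_{i':(i',j)∈E} w_{i'j}/μ_{i'j}. (Uniqueness is proved by repeatedly eliminating leaf vertices of the forest: at a leaf edge the variable is either fixed directly by (i) or expressed through (ii).) -/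

import Mathlib

open Finset

/-- The workload `z_j(w) = ∑_{i':(i',j)∈E} w_{i'j}/μ_{i'j}` brought to charger type `j`
(for `w` supported on the edge set, this is `∑_{i'} w_{i'j}/μ_{i'j}`). -/
noncomputable def workload {I J : Type*} [Fintype I] (mu : I × J → ℝ) (w : I × J → ℝ) (j : J) : ℝ :=
  ∑ i : I, w (i, j) / mu (i, j)

set_option linter.unusedSectionVars false

section Graph

open SimpleGraph

variable {V : Type*}

private lemma acyclic_mono' {G G' : SimpleGraph V} (h : G ≤ G') (hG' : G'.IsAcyclic) :
    G.IsAcyclic := fun _ c hc => hG' (c.mapLe h) ((Walk.mapLe_isCycle h).mpr hc)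

/-- In a finite acyclic graph with at least one edge, there is a vertex with a unique neighbor. -/
private lemma exists_unique_nbr [Fintype V] {G : SimpleGraph V} (hG : G.IsAcyclic)
    {a b : V} (hab : G.Adj a b) : ∃ x y, G.Adj x y ∧ ∀ z, G.Adj x z → z = y := by
  classical
  have : Nonempty V := ⟨a⟩
  set P : ℕ → Prop := fun n => ∃ (u v : V) (p : G.Walk u v), p.IsPath ∧ p.length = n with hP
  have hP1 : P 1 := ⟨a, b, Walk.cons hab Walk.nil, by simp [Walk.cons_isPath_iff, hab.ne], by simp⟩
  have hcard : 1 ≤ Fintype.card V := Fintype.card_pos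
  have hPN : P (Nat.findGreatest P (Fintype.card V)) := Nat.findGreatest_spec hcard hP1
  have hN1 : 1 ≤ Nat.findGreatest P (Fintype.card V) := Nat.le_findGreatest hcard hP1
  set N := Nat.findGreatest P (Fintype.card V) with hNdef
  obtain ⟨u, v, p, hp, hlen⟩ := hPN
  have hmax : ¬ P (N + 1) :=
    Nat.findGreatest_is_greatest (Nat.lt_succ_self N)
      (by have h1 := hp.length_lt; omega)
  obtain ⟨rp, hpr, hlr⟩ : ∃ rp : G.Walk v u, rp.IsPath ∧ rp.length = N :=
    ⟨p.reverse, hp.reverse, by simp [hlen]⟩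
  cases rp with
  | nil => simp at hlr; omega
  | @cons _ c _ hvc q =>
    refine ⟨v, c, hvc, fun z hz => ?_⟩
    by_contra hzc
    have hzv : z ≠ v := hz.ne'
    have hzsup : z ∈ (Walk.cons hvc q).support := by
      by_contra hns
      exact hmax ⟨z, u, Walk.cons hz.symm (Walk.cons hvc q),
        (Walk.cons_isPath_iff _ _).mpr ⟨hpr, hns⟩, by simp [hlr]⟩
    have hvq : v ∉ q.support := ((Walk.cons_isPath_iff _ _).mp hpr).2
    apply hG (Walk.cons hz.symm ((Walk.cons hvc q).takeUntil z hzsup))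
    rw [Walk.cons_isCycle_iff]
    refine ⟨hpr.takeUntil hzsup, fun he => ?_⟩
    have hmem : s(z, v) ∈ (Walk.cons hvc q).edges :=
      Walk.edges_takeUntil_subset _ hzsup he
    rw [Walk.edges_cons, List.mem_cons] at hmem
    rcases hmem with hmem | hmem
    · rw [Sym2.eq_iff] at hmem
      rcases hmem with ⟨h1, h2⟩ | ⟨h1, h2⟩
      · exact hzv h1
      · exact hzc h1
    · exact hvq (q.snd_mem_support_of_mem_edges hmem)

end Graph

section Bip

variable {I J : Type*} [Fintype I] [Fintype J] [DecidableEq I] [DecidableEq J]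


private def brel (F : Finset (I × J)) : (I ⊕ J) → (I ⊕ J) → Prop :=
  fun a b => ∃ p ∈ F, a = Sum.inl p.1 ∧ b = Sum.inr p.2

private lemma brel_mono {F F' : Finset (I × J)} (h : F ⊆ F') :
    SimpleGraph.fromRel (brel F) ≤ SimpleGraph.fromRel (brel F') := by
  intro a b hab
  rw [SimpleGraph.fromRel_adj] at hab ⊢
  obtain ⟨hne, hr | hr⟩ := hab
  · obtain ⟨p, hp, h1, h2⟩ := hr
    exact ⟨hne, Or.inl ⟨p, h hp, h1, h2⟩⟩
  · obtain ⟨p, hp, h1, h2⟩ := hr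
    exact ⟨hne, Or.inr ⟨p, h hp, h1, h2⟩⟩

private lemma exists_leaf (F : Finset (I × J)) (hne : F.Nonempty)
    (hac : (SimpleGraph.fromRel (brel F)).IsAcyclic) :
    ∃ p ∈ F, (∀ j', (p.1, j') ∈ F → j' = p.2) ∨ (∀ i', (i', p.2) ∈ F → i' = p.1) := by
  obtain ⟨⟨i0, j0⟩, hp0⟩ := hne
  have hadj : (SimpleGraph.fromRel (brel F)).Adj (Sum.inl i0) (Sum.inr j0) :=
    (SimpleGraph.fromRel_adj _ _ _).mpr ⟨by simp, Or.inl ⟨(i0, j0), hp0, rfl, rfl⟩⟩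
  obtain ⟨x, y, hxy, huniq⟩ := exists_unique_nbr hac hadj
  rw [SimpleGraph.fromRel_adj] at hxy
  obtain ⟨hne', h | h⟩ := hxy
  · obtain ⟨p, hpF, rfl, rfl⟩ := h
    refine ⟨p, hpF, Or.inl fun j' hj' => ?_⟩
    have := huniq (Sum.inr j')
      ((SimpleGraph.fromRel_adj _ _ _).mpr ⟨by simp, Or.inl ⟨(p.1, j'), hj', rfl, rfl⟩⟩)
    simpa using this
  · obtain ⟨p, hpF, rfl, rfl⟩ := h
    refine ⟨p, hpF, Or.inr fun i' hi' => ?_⟩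
    have := huniq (Sum.inl i')
      ((SimpleGraph.fromRel_adj _ _ _).mpr ⟨by simp, Or.inr ⟨(i', p.2), hi', rfl, rfl⟩⟩)
    simpa using this

private lemma kernel_zero (mu : I × J → ℝ) (F : Finset (I × J))
    (hmu : ∀ p ∈ F, 0 < mu p)
    (hac : (SimpleGraph.fromRel (brel F)).IsAcyclic)
    (w : I × J → ℝ) (hsupp : ∀ p ∉ F, w p = 0)
    (hrow : ∀ i, ∑ j, w (i, j) = 0) (hcol : ∀ j, ∑ i, w (i, j) / mu (i, j) = 0) :
    ∀ p, w p = 0 := by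
  classical
  induction F using Finset.strongInduction with
  | _ F ih =>
    intro p
    rcases F.eq_empty_or_nonempty with rfl | hne
    · exact hsupp p (notMem_empty p)
    obtain ⟨q, hqF, hcase⟩ := exists_leaf F hne hac
    obtain ⟨a, b⟩ := q
    have hq0 : w (a, b) = 0 := by
      rcases hcase with hL | hR
      · have h0 := hrow a
        rwa [Finset.sum_eq_single_of_mem b (mem_univ _)
          (fun j _ hj => hsupp _ (fun hmem => hj (hL j hmem)))] at h0
      · have h0 := hcol b
        rw [Finset.sum_eq_single_of_mem a (mem_univ _)
          (fun i _ hi => by rw [hsupp _ (fun hmem => hi (hR i hmem)), zero_div])] at h0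
        have := (hmu _ hqF).ne'
        field_simp at h0
        simpa using h0
    refine ih (F.erase (a, b)) (Finset.erase_ssubset hqF)
      (fun r hr => hmu r (Finset.erase_subset _ _ hr))
      (acyclic_mono' (brel_mono (Finset.erase_subset _ _)) hac)
      (fun r hr => ?_) p
    by_cases hrq : r = (a, b)
    · exact hrq ▸ hq0
    · exact hsupp r (fun hrF => hr (Finset.mem_erase.mpr ⟨hrq, hrF⟩))

private lemma workload_eq_zero (E : Finset (I × J)) (mu : I × J → ℝ) (w : I × J → ℝ)
    (f : I → J) (hf : ∀ i, (i, f i) ∈ E)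
    (hsupp : ∀ p ∉ E, w p = 0)
    (hrow : ∀ i, ∑ j, w (i, j) = 0)
    (hbal : ∀ i j j', (i, j) ∈ E → (i, j') ∈ E →
      workload mu w j / mu (i, j) = workload mu w j' / mu (i, j')) :
    ∀ j, workload mu w j = 0 := by
  classical
  have key : ∑ j, workload mu w j ^ 2 = 0 := by
    have h1 : ∀ j, workload mu w j ^ 2 = ∑ i, w (i, j) * (workload mu w j / mu (i, j)) := by
      intro j
      have h2 : workload mu w j ^ 2 = (∑ i, w (i, j) / mu (i, j)) * workload mu w j := by
        rw [pow_two]; rfl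
      rw [h2, Finset.sum_mul]
      exact Finset.sum_congr rfl fun i _ => by rw [div_mul_eq_mul_div, mul_div_assoc]
    calc ∑ j, workload mu w j ^ 2
        = ∑ j, ∑ i, w (i, j) * (workload mu w j / mu (i, j)) := by
          exact Finset.sum_congr rfl fun j _ => h1 j
      _ = ∑ i, ∑ j, w (i, j) * (workload mu w j / mu (i, j)) := Finset.sum_comm
      _ = ∑ i, ∑ j, w (i, j) * (workload mu w (f i) / mu (i, f i)) := by
          refine Finset.sum_congr rfl fun i _ => Finset.sum_congr rfl fun j _ => ?_
          by_cases hij : (i, j) ∈ E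
          · rw [hbal i j (f i) hij (hf i)]
          · rw [hsupp _ hij, zero_mul, zero_mul]
      _ = ∑ i, (∑ j, w (i, j)) * (workload mu w (f i) / mu (i, f i)) := by
          exact Finset.sum_congr rfl fun i _ => (Finset.sum_mul _ _ _).symm
      _ = 0 := by
          refine Finset.sum_eq_zero fun i _ => ?_
          rw [hrow i, zero_mul]
  intro j
  have h0 := (Finset.sum_eq_zero_iff_of_nonneg (fun j _ => sq_nonneg _)).mp key j (mem_univ j)
  exact pow_eq_zero_iff (two_ne_zero) |>.mp h0

end Bip

/-- **Well-definedness of the load-distribution map `H` on a forest of basic activities.**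
Let `E ⊆ I × J` be a set of edges such that the bipartite graph on `I ⊔ J` with edge set `E`
is acyclic, and every `i ∈ I` is incident to at least one edge. Then for every `v ∈ ℝ^I`
there is a *unique* family `w = (w_{ij})_{(i,j)∈E}` (extended by zero off `E`) such that
(i) `∑_{j:(i,j)∈E} w_{ij} = v_i` for every `i`, and
(ii) `z_j(w)/μ_{ij} = z_{j'}(w)/μ_{ij'}` for every `i` and all edges `(i,j), (i,j') ∈ E`,
where `z_j(w) = ∑_{i':(i',j)∈E} w_{i'j}/μ_{i'j}`. -/
theorem load_distribution_map_well_defined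
    {I J : Type*} [Fintype I] [Fintype J] [Nonempty I] [Nonempty J]
    [DecidableEq I] [DecidableEq J]
    (E : Finset (I × J))
    (hE : ∀ i : I, ∃ j : J, (i, j) ∈ E)
    (hforest : (SimpleGraph.fromRel (fun a b : I ⊕ J =>
      ∃ p ∈ E, a = Sum.inl p.1 ∧ b = Sum.inr p.2)).IsAcyclic)
    (mu : I × J → ℝ) (hmu : ∀ p ∈ E, 0 < mu p) :
    ∀ v : I → ℝ, ∃! w : I × J → ℝ,
      (∀ p ∉ E, w p = 0) ∧
      (∀ i : I, ∑ j : J, w (i, j) = v i) ∧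
      (∀ (i : I) (j j' : J), (i, j) ∈ E → (i, j') ∈ E →
        workload mu w j / mu (i, j) = workload mu w j' / mu (i, j')) := by
  classical
  have hforest' : (SimpleGraph.fromRel (brel E)).IsAcyclic := hforest
  choose f hf using hE
  set B : Finset (I × J) := E.filter (fun p => p.2 ≠ f p.1) with hBdef
  -- the extension-by-zero map
  set ex : (↥E → ℝ) → (I × J → ℝ) :=
    fun u p => if h : p ∈ E then u ⟨p, h⟩ else 0 with hexdef
  have hex_supp : ∀ u, ∀ p ∉ E, ex u p = 0 := fun u p hp => dif_neg hp
  have hex_add : ∀ u u', ex (u + u') = ex u + ex u' := by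
    intro u u'; funext p
    by_cases h : p ∈ E <;> simp [hexdef, h]
  have hex_smul : ∀ (c : ℝ) u, ex (c • u) = c • ex u := by
    intro c u; funext p
    by_cases h : p ∈ E <;> simp [hexdef, h]
  have hwl_add : ∀ (w w' : I × J → ℝ) j,
      workload mu (w + w') j = workload mu w j + workload mu w' j := by
    intro w w' j
    simp [workload, add_div, Finset.sum_add_distrib]
  have hwl_smul : ∀ (c : ℝ) (w : I × J → ℝ) j, workload mu (c • w) j = c * workload mu w j := by
    intro c w j
    simp [workload, Finset.mul_sum, mul_div_assoc]
  have hwl_sub : ∀ (w w' : I × J → ℝ) j,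
      workload mu (w - w') j = workload mu w j - workload mu w' j := by
    intro w w' j
    simp [workload, sub_div, Finset.sum_sub_distrib]
  -- the square linear system
  set T : (↥E → ℝ) →ₗ[ℝ] (I → ℝ) × (↥B → ℝ) :=
    { toFun := fun u => (fun i => ∑ j, ex u (i, j),
        fun e => workload mu (ex u) e.1.2 / mu e.1 -
          workload mu (ex u) (f e.1.1) / mu (e.1.1, f e.1.1))
      map_add' := by
        intro u u'
        refine Prod.ext ?_ ?_
        · funext i
          simp [hex_add, Finset.sum_add_distrib]
        · funext e
          simp only [hex_add, hwl_add, add_div, Prod.snd_add, Pi.add_apply]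
          ring
      map_smul' := by
        intro c u
        refine Prod.ext ?_ ?_
        · funext i
          simp [hex_smul, Finset.mul_sum]
        · funext e
          simp only [hex_smul, hwl_smul, mul_div_assoc, RingHom.id_apply, Prod.smul_snd,
            Pi.smul_apply, smul_eq_mul]
          ring } with hTdef
  have hT1 : ∀ u i, (T u).1 i = ∑ j, ex u (i, j) := fun u i => rfl
  have hT2 : ∀ u (e : ↥B), (T u).2 e = workload mu (ex u) e.1.2 / mu e.1 -
      workload mu (ex u) (f e.1.1) / mu (e.1.1, f e.1.1) := fun u e => rfl
  -- balance from vanishing of the second component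
  have hbal_of : ∀ u, (T u).2 = 0 → ∀ i j j', (i, j) ∈ E → (i, j') ∈ E →
      workload mu (ex u) j / mu (i, j) = workload mu (ex u) j' / mu (i, j') := by
    intro u hu i j j' hj hj'
    have base : ∀ j'', (i, j'') ∈ E →
        workload mu (ex u) j'' / mu (i, j'') = workload mu (ex u) (f i) / mu (i, f i) := by
      intro j'' hj''
      by_cases h : j'' = f i
      · subst h; rfl
      · have he : ((i, j'') : I × J) ∈ B := Finset.mem_filter.mpr ⟨hj'', h⟩
        have := congrFun hu ⟨(i, j''), he⟩
        rw [hT2] at this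
        exact sub_eq_zero.mp this
    rw [base j hj, base j' hj']
  -- injectivity
  have hinj : Function.Injective T := by
    rw [injective_iff_map_eq_zero]
    intro u hu
    have hu1 : (T u).1 = 0 := by rw [hu]; rfl
    have hu2 : (T u).2 = 0 := by rw [hu]; rfl
    have hrow : ∀ i, ∑ j, ex u (i, j) = 0 := fun i => by
      rw [← hT1 u i, hu1]; rfl
    have hbal := hbal_of u hu2
    have hcol := workload_eq_zero E mu (ex u) f hf (hex_supp u) hrow hbal
    have hz : ∀ p, ex u p = 0 :=
      kernel_zero mu E hmu hforest' (ex u) (hex_supp u) hrow (fun j => hcol j)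
    funext e
    simpa [hexdef, e.2] using hz e.1
  -- dimension count
  have hcardfilter : (E.filter (fun p => p.2 = f p.1)).card = Fintype.card I := by
    have himg : E.filter (fun p => p.2 = f p.1) = Finset.image (fun i => (i, f i)) univ := by
      ext p
      simp only [Finset.mem_filter, Finset.mem_image, mem_univ, true_and]
      constructor
      · rintro ⟨hp, h⟩
        exact ⟨p.1, by rw [← h]⟩
      · rintro ⟨i, rfl⟩
        exact ⟨hf i, rfl⟩
    rw [himg, Finset.card_image_of_injective _ (fun a b h => congrArg Prod.fst h),
      Finset.card_univ]
  have hrank : Module.finrank ℝ (↥E → ℝ) = Module.finrank ℝ ((I → ℝ) × (↥B → ℝ)) := by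
    rw [Module.finrank_pi, Module.finrank_prod, Module.finrank_pi, Module.finrank_pi]
    rw [Fintype.card_coe, Fintype.card_coe]
    have h2 := Finset.card_filter_add_card_filter_not (s := E) (p := fun p => p.2 = f p.1)
    have h3 : (E.filter (fun p => ¬ p.2 = f p.1)).card = B.card := by
      simp [hBdef, ne_eq]
    omega
  have hsurj : Function.Surjective T :=
    (LinearMap.injective_iff_surjective_of_finrank_eq_finrank hrank).mp hinj
  intro v
  obtain ⟨u, hu⟩ := hsurj (v, 0)
  have hu1 : (T u).1 = v := by rw [hu]
  have hu2 : (T u).2 = 0 := by rw [hu]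
  refine ⟨ex u, ⟨hex_supp u, fun i => by rw [← hT1 u i, hu1], hbal_of u hu2⟩, ?_⟩
  rintro w' ⟨hs', hr', hb'⟩
  -- uniqueness via the kernel
  set d : I × J → ℝ := w' - ex u with hddef
  have hds : ∀ p ∉ E, d p = 0 := by
    intro p hp
    simp [hddef, hs' p hp, hex_supp u p hp]
  have hdr : ∀ i, ∑ j, d (i, j) = 0 := by
    intro i
    have h1 : ∑ j, ex u (i, j) = v i := by rw [← hT1 u i, hu1]
    simp [hddef, Finset.sum_sub_distrib, hr' i, h1]
  have hdb : ∀ i j j', (i, j) ∈ E → (i, j') ∈ E →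
      workload mu d j / mu (i, j) = workload mu d j' / mu (i, j') := by
    intro i j j' hj hj'
    rw [hddef, hwl_sub, hwl_sub, sub_div, sub_div, hb' i j j' hj hj',
      hbal_of u hu2 i j j' hj hj']
  have hdcol := workload_eq_zero E mu d f hf hds hdr hdb
  have hdz : ∀ p, d p = 0 :=
    kernel_zero mu E hmu hforest' d hds hdr (fun j => hdcol j)
  funext p
  have := hdz p
  rw [hddef] at this
  have : w' p - ex u p = 0 := this
  linarith
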